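/- Let U be a hollow and uniform right R-module, put M = U², U₁ = U × 0 and U₂ = 0 × U. Then for any submodule N₁ of U₁ and any surjective homomorphism h₁ : N₁ → U₂, the graph ⟨h₁⟩ = {x + h₁(x) : x ∈ N₁} is a direct summand of M. -/
import Mathlib


/-- A submodule `N` of `M` is *small* (superfluous) in `M` if `N + X ≠ M`
for every proper submodule `X` of `M`. -/
def IsSmallSubmodule {R M : Type*} [Ring R] [AddCommGroup M] [Module R M]
    (N : Submodule R M) : Prop :=
  ∀ X : Submodule R M, X ≠ ⊤ → N ⊔ X ≠ ⊤

/-- A nonzero module `M` is *hollow* if every proper submodule of `M` is small in `M`. -/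
def IsHollowModule (R M : Type*) [Ring R] [AddCommGroup M] [Module R M] : Prop :=
  Nontrivial M ∧ ∀ N : Submodule R M, N ≠ ⊤ → IsSmallSubmodule N

/-- A submodule `N` of `M` is *essential* in `M` if `N ∩ X ≠ 0`
for every nonzero submodule `X` of `M`. -/
def IsEssentialSubmodule {R M : Type*} [Ring R] [AddCommGroup M] [Module R M]
    (N : Submodule R M) : Prop :=
  ∀ X : Submodule R M, X ≠ ⊥ → N ⊓ X ≠ ⊥

/-- A nonzero module `M` is *uniform* if every nonzero submodule of `M` is essential in `M`. -/
def IsUniformModule (R M : Type*) [Ring R] [AddCommGroup M] [Module R M] : Prop :=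
  Nontrivial M ∧ ∀ N : Submodule R M, N ≠ ⊥ → IsEssentialSubmodule N

/-- `X` is a direct summand of `M`. -/
def IsDirectSummand {R M : Type*} [Ring R] [AddCommGroup M] [Module R M]
    (X : Submodule R M) : Prop :=
  ∃ Y : Submodule R M, IsCompl X Y

/-- A module `M` is *lifting* if for every submodule `N` of `M` there is a direct summand
`X` of `M` with `X ⊆ N` such that `N/X` is small in `M/X`. -/
def IsLiftingModule (R M : Type*) [Ring R] [AddCommGroup M] [Module R M] : Prop :=
  ∀ N : Submodule R M, ∃ X : Submodule R M,
    X ≤ N ∧ IsDirectSummand X ∧ IsSmallSubmodule (N.map X.mkQ)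

/-- A module `M` is *extending* if for every submodule `N` of `M` there is a direct summand
`X` of `M` such that `N` is essential in `X`. -/
def IsExtendingModule (R M : Type*) [Ring R] [AddCommGroup M] [Module R M] : Prop :=
  ∀ N : Submodule R M, ∃ X : Submodule R M,
    IsDirectSummand X ∧ N ≤ X ∧ ∀ Y : Submodule R M, Y ≤ X → Y ≠ ⊥ → N ⊓ Y ≠ ⊥

/-- A module is *uniserial* if its submodules are linearly ordered by inclusion. -/
def IsUniserialModule (R M : Type*) [Ring R] [AddCommGroup M] [Module R M] : Prop :=
  ∀ A B : Submodule R M, A ≤ B ∨ B ≤ A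

/-- An internal finite direct sum decomposition `M = ⨁ᵢ Fᵢ`. -/
def IsInternalDirectSum {R M ι : Type*} [Ring R] [AddCommGroup M] [Module R M]
    (F : ι → Submodule R M) : Prop :=
  (⨆ i, F i) = ⊤ ∧ ∀ i, Disjoint (F i) (⨆ j ∈ ({i}ᶜ : Set ι), F j)

/-- A module `M` satisfies the *finite internal exchange property* if for any direct
summand `X` of `M` and any finite direct sum decomposition `M = M₁ ⊕ ⋯ ⊕ Mₙ` there are
submodules `Mᵢ' ⊆ Mᵢ` with `M = X ⊕ M₁' ⊕ ⋯ ⊕ Mₙ'`. -/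
def SatisfiesFIEP (R M : Type*) [Ring R] [AddCommGroup M] [Module R M] : Prop :=
  ∀ (X : Submodule R M), IsDirectSummand X →
    ∀ (n : ℕ) (Mi : Fin n → Submodule R M), IsInternalDirectSum Mi →
      ∃ Mi' : Fin n → Submodule R M, (∀ i, Mi' i ≤ Mi i) ∧
        IsInternalDirectSum (fun o : Option (Fin n) => o.elim X Mi')

/-- Let `U` be a hollow and uniform module, `M = U²`, `U₁ = U × 0`, `U₂ = 0 × U`.
For any submodule `N₁` of `U₁` and any surjective homomorphism `h₁ : N₁ → U₂`, the graph
`⟨h₁⟩ = {x + h₁(x) : x ∈ N₁}` is a direct summand of `M`. -/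
theorem stmt_2 {R U : Type*} [Ring R] [AddCommGroup U] [Module R U]
    (hH : IsHollowModule R U) (hU : IsUniformModule R U)
    (N₁ : Submodule R (U × U)) (hN₁ : N₁ ≤ Submodule.fst R U U)
    (h₁ : ↥N₁ →ₗ[R] ↥(Submodule.snd R U U)) (hs : Function.Surjective h₁) :
    IsDirectSummand
      (LinearMap.range (N₁.subtype + (Submodule.snd R U U).subtype ∘ₗ h₁)) := by
  
  classical
  set g : ↥N₁ →ₗ[R] U × U := N₁.subtype + (Submodule.snd R U U).subtype ∘ₗ h₁ with hgdef
  have hmemfst : ∀ p : U × U, p ∈ Submodule.fst R U U ↔ p.2 = 0 := by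
    intro p; simp [Submodule.fst]
  have hmemsnd : ∀ p : U × U, p ∈ Submodule.snd R U U ↔ p.1 = 0 := by
    intro p; simp [Submodule.snd]
  have hx2 : ∀ x : ↥N₁, (x : U × U).2 = 0 := fun x => (hmemfst _).mp (hN₁ x.2)
  have hx1 : ∀ x : ↥N₁, ((h₁ x : U × U)).1 = 0 := fun x => (hmemsnd _).mp (h₁ x).2
  set F : ↥N₁ →ₗ[R] U :=
    (LinearMap.snd R U U).comp ((Submodule.snd R U U).subtype.comp h₁) with hFdef
  have hFapp : ∀ x : ↥N₁, F x = ((h₁ x : U × U)).2 := fun x => rfl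
  have hgx : ∀ x : ↥N₁, g x = ((x : U × U).1, F x) := by
    intro x
    have h2 := hx2 x
    have h1 := hx1 x
    simp only [hgdef, LinearMap.add_apply, LinearMap.comp_apply, Submodule.subtype_apply,
      hFapp]
    ext <;> simp [h1, h2]
  have hFsurj : ∀ u : U, ∃ x : ↥N₁, F x = u := by
    intro u
    obtain ⟨x, hx⟩ := hs ⟨(0, u), (hmemsnd _).mpr rfl⟩
    exact ⟨x, by rw [hFapp, hx]⟩
  have hFzero : ∀ x : ↥N₁, F x = 0 → h₁ x = 0 := by
    intro x hx
    ext : 1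
    exact Prod.ext (hx1 x) hx
  -- case: h₁ injective
  by_cases hinj : ∀ x : ↥N₁, h₁ x = 0 → x = 0
  · refine ⟨Submodule.fst R U U, ?_, ?_⟩
    · rw [Submodule.disjoint_def]
      rintro p ⟨x, rfl⟩ hp
      have h2 : F x = 0 := by
        have := (hmemfst _).mp hp
        rw [hgx] at this; exact this
      have : x = 0 := hinj x (hFzero x h2)
      rw [this]; simp
    · rw [codisjoint_iff, Submodule.eq_top_iff']
      intro p
      obtain ⟨x, hx⟩ := hFsurj p.2
      have h1 : g x ∈ LinearMap.range g ⊔ Submodule.fst R U U :=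
        Submodule.mem_sup_left ⟨x, rfl⟩
      have h2 : ((p.1 - (x : U × U).1, 0) : U × U) ∈
          LinearMap.range g ⊔ Submodule.fst R U U :=
        Submodule.mem_sup_right ((hmemfst _).mpr rfl)
      have := Submodule.add_mem _ h1 h2
      rwa [hgx, hx, show (((x : U × U).1, p.2) + (p.1 - (x : U × U).1, 0) : U × U) = p by
        ext <;> simp] at this
  -- case: N₁ = U₁
  by_cases htop : Submodule.fst R U U ≤ N₁
  · refine ⟨Submodule.snd R U U, ?_, ?_⟩
    · rw [Submodule.disjoint_def]
      rintro p ⟨x, rfl⟩ hp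
      have h1 : (x : U × U).1 = 0 := by
        have := (hmemsnd _).mp hp
        rw [hgx] at this; exact this
      have hx0 : x = 0 := by
        ext : 1
        exact Prod.ext h1 (hx2 x)
      rw [hx0]; simp
    · rw [codisjoint_iff, Submodule.eq_top_iff']
      intro p
      set x : ↥N₁ := ⟨(p.1, 0), htop ((hmemfst _).mpr rfl)⟩ with hxdef
      have h1 : g x ∈ LinearMap.range g ⊔ Submodule.snd R U U :=
        Submodule.mem_sup_left ⟨x, rfl⟩
      have h2 : ((0, p.2 - F x) : U × U) ∈ LinearMap.range g ⊔ Submodule.snd R U U :=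
        Submodule.mem_sup_right ((hmemsnd _).mpr rfl)
      have := Submodule.add_mem _ h1 h2
      rwa [hgx, show ((((x : U × U)).1, F x) + (0, p.2 - F x) : U × U) = p by
        ext <;> simp [hxdef]] at this
  -- main case
  push_neg at hinj
  obtain ⟨x₀, hx₀h, hx₀ne⟩ := hinj
  set K : Submodule R U :=
    Submodule.map ((LinearMap.fst R U U).comp N₁.subtype) (LinearMap.ker h₁) with hKdef
  have hK0 : K ≠ ⊥ := by
    intro h
    apply hx₀ne
    have hmem : (x₀ : U × U).1 ∈ K := ⟨x₀, hx₀h, rfl⟩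
    rw [h, Submodule.mem_bot] at hmem
    ext : 1
    exact Prod.ext hmem (hx2 x₀)
  set N : Submodule R U := N₁.map (LinearMap.fst R U U) with hNdef
  have hNtop : N ≠ ⊤ := by
    intro h
    apply htop
    intro p hp
    have hp2 : p.2 = 0 := (hmemfst _).mp hp
    have : p.1 ∈ N := h ▸ Submodule.mem_top
    obtain ⟨q, hq, hq1⟩ := this
    have : q = p := Prod.ext hq1 ((hx2 ⟨q, hq⟩).trans hp2.symm)
    exact this ▸ hq
  set j : ↥N₁ →ₗ[R] U × U := LinearMap.prod F ((LinearMap.fst R U U).comp N₁.subtype)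
    with hjdef
  have hjx : ∀ x : ↥N₁, j x = (F x, (x : U × U).1) := fun x => rfl
  refine ⟨LinearMap.range j, ?_, ?_⟩
  · -- disjointness
    rw [Submodule.disjoint_def]
    rintro p ⟨x, rfl⟩ ⟨y, hy⟩
    rw [hgx] at hy ⊢
    rw [hjx] at hy
    have e1 : F y = (x : U × U).1 := (Prod.ext_iff.mp hy).1
    have e2 : (y : U × U).1 = F x := (Prod.ext_iff.mp hy).2
    have hx10 : (x : U × U).1 = 0 := by
      by_contra hne
      have hspan : Submodule.span R {(x : U × U).1} ≠ ⊥ := by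
        simpa [Submodule.span_singleton_eq_bot] using hne
      have hint := hU.2 K hK0 _ hspan
      obtain ⟨k, hk, hkne⟩ := Submodule.exists_mem_ne_zero_of_ne_bot hint
      obtain ⟨hkK, hkS⟩ := hk
      obtain ⟨r, hr⟩ := Submodule.mem_span_singleton.mp hkS
      obtain ⟨z, hzker, hz1⟩ := hkK
      have hzval : (z : U × U) = (k, 0) := Prod.ext hz1 (hx2 z)
      have hrx : r • x = z := by
        ext : 1
        rw [hzval]
        exact Prod.ext (by simpa using hr) (by simp [hx2 x])
      have hFz : F z = 0 := by
        rw [hFapp, LinearMap.mem_ker.mp hzker]; rfl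
      have hFrx : r • F x = 0 := by
        rw [← map_smul, hrx, hFz]
      have hry : r • y = 0 := by
        ext : 1
        refine Prod.ext ?_ (by simp [hx2 y])
        simpa [e2] using hFrx
      have : r • F y = 0 := by rw [← map_smul, hry, map_zero]
      rw [e1, hr] at this
      exact hkne this
    have hx0 : x = 0 := by
      ext : 1
      exact Prod.ext hx10 (hx2 x)
    rw [hx0]; simp
  · -- codisjointness
    set W : Submodule R U := Submodule.map (LinearMap.fst R U U)
      ((LinearMap.range g ⊔ LinearMap.range j) ⊓ Submodule.fst R U U) with hWdef
    have hWN : N ⊔ W = ⊤ := by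
      rw [Submodule.eq_top_iff']
      intro u
      obtain ⟨x₁, hx₁⟩ := hFsurj (-u)
      obtain ⟨x₂, hx₂⟩ := hFsurj ((x₁ : U × U).1)
      have hp : g x₂ - j x₁ ∈ (LinearMap.range g ⊔ LinearMap.range j) ⊓
          Submodule.fst R U U := by
        constructor
        · exact Submodule.sub_mem _ (Submodule.mem_sup_left ⟨x₂, rfl⟩)
            (Submodule.mem_sup_right ⟨x₁, rfl⟩)
        · exact (hmemfst _).mpr (by rw [hgx, hjx]; simp [hx₂])
      have hval : (g x₂ - j x₁).1 = (x₂ : U × U).1 + u := by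
        rw [hgx, hjx]
        simp [hx₁]
      have hWmem : (x₂ : U × U).1 + u ∈ W := ⟨g x₂ - j x₁, hp, hval⟩
      have hNmem : -(x₂ : U × U).1 ∈ N := Submodule.neg_mem _ ⟨x₂, x₂.2, rfl⟩
      have : -(x₂ : U × U).1 + ((x₂ : U × U).1 + u) ∈ N ⊔ W :=
        Submodule.add_mem _ (Submodule.mem_sup_left hNmem) (Submodule.mem_sup_right hWmem)
      simpa using this
    have hW : W = ⊤ := by
      by_contra hWne
      exact hH.2 N hNtop W hWne hWN
    have hfstle : Submodule.fst R U U ≤ LinearMap.range g ⊔ LinearMap.range j := by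
      intro p hp
      have hp2 : p.2 = 0 := (hmemfst _).mp hp
      have : p.1 ∈ W := hW ▸ Submodule.mem_top
      obtain ⟨q, hq, hq1⟩ := this
      have hq2 : q.2 = 0 := (hmemfst _).mp hq.2
      have : q = p := Prod.ext hq1 (hq2.trans hp2.symm)
      exact this ▸ hq.1
    rw [codisjoint_iff, Submodule.eq_top_iff']
    intro p
    obtain ⟨x₃, hx₃⟩ := hFsurj p.2
    have h1 : g x₃ ∈ LinearMap.range g ⊔ LinearMap.range j :=
      Submodule.mem_sup_left ⟨x₃, rfl⟩
    have h2 : ((p.1 - (x₃ : U × U).1, 0) : U × U) ∈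
        LinearMap.range g ⊔ LinearMap.range j :=
      hfstle ((hmemfst _).mpr rfl)
    have := Submodule.add_mem _ h1 h2
    rwa [hgx, hx₃, show (((x₃ : U × U).1, p.2) + (p.1 - (x₃ : U × U).1, 0) : U × U) = p by
      ext <;> simp] at this
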